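/- For a finite-dimensional von Neumann algebra A of operators on a finite-dimensional Hilbert space H, any operator B with ‖B‖ ≤ 1, and P_{A'} the orthogonal (Hilbert–Schmidt) projection onto the commutant A' of A, one has ‖B - P_{A'}(B)‖ ≤ sup over A-elements a with ‖a‖ ≤ 1 of ‖[a, B]‖. -/

import Mathlib

set_option synthInstance.maxHeartbeats 1000000
set_option maxHeartbeats 4000000

open Matrix Kronecker MeasureTheory
open scoped ComplexOrder

noncomputable section

/-- Square complex matrices of size `n`. -/
abbrev Mat (n : ℕ) := Matrix (Fin n) (Fin n) ℂ

/-- Operator norm (spectral norm) of a square matrix. -/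
noncomputable def opNorm {m : Type*} [Fintype m] [DecidableEq m]
    (A : Matrix m m ℂ) : ℝ :=
  ‖Matrix.toEuclideanCLM (𝕜 := ℂ) A‖

/-- Trace norm of a square matrix. -/
noncomputable def traceNorm {m : Type*} [Fintype m] [DecidableEq m]
    (A : Matrix m m ℂ) : ℝ :=
  (((Matrix.isHermitian_conjTranspose_mul_self A).eigenvectorUnitary : Matrix m m ℂ) *
    diagonal (((↑) : ℝ → ℂ) ∘ (√·) ∘ (Matrix.isHermitian_conjTranspose_mul_self A).eigenvalues) *
    (star (Matrix.isHermitian_conjTranspose_mul_self A).eigenvectorUnitary : Matrix m m ℂ)).trace.re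

/-- Trivial extension `Φ ⊗ id` of a map on matrices, defined entrywise. -/
def extendId {a b : ℕ} (Φ : Mat a → Mat b) (m : ℕ)
    (M : Matrix (Fin a × Fin m) (Fin a × Fin m) ℂ) :
    Matrix (Fin b × Fin m) (Fin b × Fin m) ℂ :=
  Matrix.of fun r c => Φ (Matrix.of fun p q => M (p, r.2) (q, c.2)) r.1 c.1

/-- Diamond norm of a (difference of) map(s) `Mat a → Mat b`, with ancilla of
dimension equal to the input dimension. -/
noncomputable def dnorm {a b : ℕ} (Φ : Mat a → Mat b) : ℝ :=
  ⨆ ρ : {ρ : Matrix (Fin a × Fin a) (Fin a × Fin a) ℂ // ρ.PosSemidef ∧ ρ.trace = 1},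
    traceNorm (extendId Φ a ρ.1)

/-- A map is a quantum channel (CPTP) iff it admits a Kraus representation. -/
def IsCPTP {a b : ℕ} (Φ : Mat a → Mat b) : Prop :=
  ∃ (κ : ℕ) (K : Fin κ → Matrix (Fin b) (Fin a) ℂ),
    (∀ ρ, Φ ρ = ∑ i, K i * ρ * (K i)ᴴ) ∧ (∑ i, (K i)ᴴ * K i = 1)

/-- `Nh` is a complementary channel of `N` (with environment of dimension `e`). -/
def IsComplementary {a b e : ℕ} (N : Mat a → Mat b) (Nh : Mat a → Mat e) : Prop :=
  ∃ K : Fin e → Matrix (Fin b) (Fin a) ℂ,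
    (∀ ρ, N ρ = ∑ i, K i * ρ * (K i)ᴴ) ∧ (∑ i, (K i)ᴴ * K i = 1) ∧
    (∀ ρ, Nh ρ = Matrix.of fun i j => (K i * ρ * (K j)ᴴ).trace)

/-- The commutant of a set of matrices. -/
def commutant {n : ℕ} (A : Set (Mat n)) : Set (Mat n) :=
  {X | ∀ a ∈ A, a * X = X * a}

/-- `P` is the Hilbert–Schmidt-orthogonal projection onto the set `S`. -/
def IsHSProjectionOnto {n : ℕ} (P : Mat n → Mat n) (S : Set (Mat n)) : Prop :=
  (∀ X, P X ∈ S) ∧ (∀ X ∈ S, P X = X) ∧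
  (∀ X Y, ((P X)ᴴ * Y).trace = (Xᴴ * P Y).trace)

end

namespace CP

open NormedSpace

variable {n : ℕ}

lemma real_smul_mat (a : ℝ) (M : Mat n) : a • M = (a : ℂ) • M := by
  ext i j
  simp [Matrix.smul_apply, Complex.real_smul]

lemma opNorm_nonneg (X : Mat n) : 0 ≤ opNorm X := norm_nonneg _

lemma opNorm_mul_le (X Y : Mat n) : opNorm (X * Y) ≤ opNorm X * opNorm Y := by
  show ‖Matrix.toEuclideanCLM (𝕜 := ℂ) (X * Y)‖ ≤ _
  rw [_root_.map_mul]
  exact norm_mul_le _ _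

lemma opNorm_sub_le (X Y : Mat n) : opNorm (X - Y) ≤ opNorm X + opNorm Y := by
  show ‖Matrix.toEuclideanCLM (𝕜 := ℂ) (X - Y)‖ ≤ _
  rw [map_sub]
  exact norm_sub_le _ _

lemma opNorm_add_le (X Y : Mat n) : opNorm (X + Y) ≤ opNorm X + opNorm Y := by
  show ‖Matrix.toEuclideanCLM (𝕜 := ℂ) (X + Y)‖ ≤ _
  rw [map_add]
  exact norm_add_le _ _

lemma opNorm_sub_comm (X Y : Mat n) : opNorm (X - Y) = opNorm (Y - X) := by
  show ‖Matrix.toEuclideanCLM (𝕜 := ℂ) (X - Y)‖ = ‖Matrix.toEuclideanCLM (𝕜 := ℂ) (Y - X)‖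
  rw [map_sub, map_sub, norm_sub_rev]

lemma opNorm_smul (c : ℂ) (X : Mat n) : opNorm (c • X) = ‖c‖ * opNorm X := by
  show ‖Matrix.toEuclideanCLM (𝕜 := ℂ) (c • X)‖ = _
  rw [_root_.map_smul]
  exact norm_smul c (Matrix.toEuclideanCLM (𝕜 := ℂ) X)

lemma opNorm_le_one_of_unitary {u : Mat n} (h1 : star u * u = 1) : opNorm u ≤ 1 := by
  have h2 : star (Matrix.toEuclideanCLM (𝕜 := ℂ) u) * (Matrix.toEuclideanCLM (𝕜 := ℂ) u) = 1 := by
    rw [← map_star, ← _root_.map_mul, h1, _root_.map_one]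
  have h3 : ‖Matrix.toEuclideanCLM (𝕜 := ℂ) u‖ * ‖Matrix.toEuclideanCLM (𝕜 := ℂ) u‖ ≤ 1 := by
    rw [← CStarRing.norm_star_mul_self, h2, ContinuousLinearMap.one_def]
    exact ContinuousLinearMap.norm_id_le
  have h4 : 0 ≤ ‖Matrix.toEuclideanCLM (𝕜 := ℂ) u‖ := norm_nonneg _
  show ‖Matrix.toEuclideanCLM (𝕜 := ℂ) u‖ ≤ 1
  nlinarith

lemma opNorm_mul_unitary {u : Mat n} (X : Mat n) (h1 : star u * u = 1)
    (h2 : u * star u = 1) : opNorm (X * u) = opNorm X := by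
  have hs1 : star (star u) * star u = 1 := by rw [star_star]; exact h2
  have le1 : opNorm (X * u) ≤ opNorm X := by
    calc opNorm (X * u) ≤ opNorm X * opNorm u := opNorm_mul_le _ _
    _ ≤ opNorm X * 1 :=
        mul_le_mul_of_nonneg_left (opNorm_le_one_of_unitary h1) (opNorm_nonneg X)
    _ = opNorm X := mul_one _
  have le2 : opNorm X ≤ opNorm (X * u) := by
    have hX : X = X * u * star u := by rw [mul_assoc, h2, mul_one]
    calc opNorm X = opNorm (X * u * star u) := by rw [← hX]
    _ ≤ opNorm (X * u) * opNorm (star u) := opNorm_mul_le _ _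
    _ ≤ opNorm (X * u) * 1 :=
        mul_le_mul_of_nonneg_left (opNorm_le_one_of_unitary hs1) (opNorm_nonneg _)
    _ = opNorm (X * u) := mul_one _
  linarith

lemma continuous_opNorm : Continuous fun X : Mat n => opNorm X := by
  have hL : Continuous fun X : Mat n => Matrix.toEuclideanCLM (𝕜 := ℂ) X := by
    let L : Mat n →ₗ[ℂ] (EuclideanSpace ℂ (Fin n) →L[ℂ] EuclideanSpace ℂ (Fin n)) :=
      { toFun := fun X => Matrix.toEuclideanCLM (𝕜 := ℂ) X
        map_add' := fun X Y => map_add _ X Y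
        map_smul' := fun c X => _root_.map_smul _ c X }
    exact L.continuous_of_finiteDimensional
  exact continuous_norm.comp hL

/-- Matrices as a Euclidean space (Hilbert–Schmidt inner product). -/
noncomputable def eM (n : ℕ) : Mat n ≃ₗ[ℂ] EuclideanSpace ℂ (Fin n × Fin n) where
  toFun X := (WithLp.equiv 2 _).symm fun p => X p.1 p.2
  invFun v := Matrix.of fun i j => v (i, j)
  map_add' _ _ := rfl
  map_smul' _ _ := rfl
  left_inv _ := rfl
  right_inv _ := rfl

lemma inner_eM (X Y : Mat n) :
    (inner ℂ (eM n X) (eM n Y) : ℂ) = (Xᴴ * Y).trace := by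
  simp only [eM, LinearEquiv.coe_mk, PiLp.inner_apply, RCLike.inner_apply]
  rw [Matrix.trace]
  simp only [Matrix.diag, Matrix.mul_apply, Matrix.conjTranspose_apply]
  rw [Fintype.sum_prod_type]
  rw [Finset.sum_comm]
  simp [RCLike.star_def]
  exact Finset.sum_congr rfl fun _ _ => Finset.sum_congr rfl fun _ _ => mul_comm _ _

lemma eM_inj {X : Mat n} (h : eM n X = 0) : X = 0 := by
  rw [← map_zero (eM n)] at h
  exact (eM n).injective h

lemma norm_eM_eq {X Y : Mat n}
    (h : (Xᴴ * X).trace = (Yᴴ * Y).trace) : ‖eM n X‖ = ‖eM n Y‖ := by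
  have h1 : (inner ℂ (eM n X) (eM n X) : ℂ) = inner ℂ (eM n Y) (eM n Y) := by
    rw [inner_eM, inner_eM, h]
  rw [inner_self_eq_norm_sq_to_K, inner_self_eq_norm_sq_to_K] at h1
  have h3 : (‖eM n X‖ : ℝ) ^ 2 = (‖eM n Y‖ : ℝ) ^ 2 := by exact_mod_cast h1
  nlinarith [norm_nonneg (eM n X), norm_nonneg (eM n Y)]

lemma trace_conj_unitary {u : Mat n} (M : Mat n) (h1 : star u * u = 1) :
    ((u * M * uᴴ)ᴴ * (u * M * uᴴ)).trace = (Mᴴ * M).trace := by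
  have hs : star u = uᴴ := rfl
  rw [hs] at h1
  have key : (u * M * uᴴ)ᴴ * (u * M * uᴴ) = u * (Mᴴ * M) * uᴴ := by
    have hct : (u * M * uᴴ)ᴴ = u * Mᴴ * uᴴ := by
      simp [Matrix.conjTranspose_mul, Matrix.mul_assoc]
    rw [hct]
    calc u * Mᴴ * uᴴ * (u * M * uᴴ) = u * Mᴴ * (uᴴ * u) * (M * uᴴ) := by noncomm_ring
    _ = u * (Mᴴ * M) * uᴴ := by rw [h1]; noncomm_ring
  rw [key, Matrix.trace_mul_cycle, ← mul_assoc, h1, one_mul]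

section Exp

attribute [local instance] Matrix.linftyOpNormedRing Matrix.linftyOpNormedAlgebra

lemma exp_mem_of_mem (A : StarSubalgebra ℂ (Mat n)) {C : Mat n} (hC : C ∈ A) :
    exp C ∈ A := by
  have hclosed : IsClosed ((Subalgebra.toSubmodule A.toSubalgebra :
      Submodule ℂ (Mat n)) : Set (Mat n)) :=
    Submodule.closed_of_finiteDimensional _
  have hsum := expSeries_hasSum_exp (𝕂 := ℝ) C
  have hmem : ∀ s : Finset ℕ, (∑ k ∈ s, (expSeries ℝ (Mat n) k fun _ => C)) ∈ A := by
    intro s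
    refine Subalgebra.sum_mem _ fun k _ => ?_
    rw [expSeries_apply_eq, real_smul_mat]
    exact A.toSubalgebra.smul_mem (pow_mem hC k) _
  have := hclosed.mem_of_tendsto hsum (Filter.Eventually.of_forall fun s => by
    exact hmem s)
  exact this

lemma comm_exp_smul {C Y : Mat n}
    (hcomm : ∀ t : ℝ, exp (t • C) * Y = Y * exp (t • C)) : C * Y = Y * C := by
  have d1 : HasDerivAt (fun t : ℝ => exp (t • C) * Y)
      (exp ((0 : ℝ) • C) * C * Y) 0 :=
    (hasDerivAt_exp_smul_const (𝕂 := ℝ) C (0 : ℝ)).mul_const Y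
  have d2 : HasDerivAt (fun t : ℝ => Y * exp (t • C))
      (Y * (exp ((0 : ℝ) • C) * C)) 0 :=
    (hasDerivAt_exp_smul_const (𝕂 := ℝ) C (0 : ℝ)).const_mul Y
  have hfun : (fun t : ℝ => exp (t • C) * Y) = fun t : ℝ => Y * exp (t • C) :=
    funext hcomm
  rw [hfun] at d1
  have h := d1.unique d2
  simpa [zero_smul, exp_zero] using h

lemma comm_of_comm_unitaries_sa (A : StarSubalgebra ℂ (Mat n)) (Y : Mat n)
    (hY : ∀ u, u ∈ A → star u * u = 1 → u * star u = 1 → u * Y = Y * u)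
    {h : Mat n} (hh : h ∈ A) (hsa : hᴴ = h) : h * Y = Y * h := by
  set C : Mat n := Complex.I • h with hCdef
  have hCA : C ∈ A := A.toSubalgebra.smul_mem hh _
  have hCct : Cᴴ = -C := by
    rw [hCdef, Matrix.conjTranspose_smul, hsa, Complex.star_def, Complex.conj_I, neg_smul]
  have hskew : ∀ t : ℝ, (t • C)ᴴ = -(t • C) := by
    intro t
    rw [real_smul_mat, Matrix.conjTranspose_smul, hCct]
    simp [smul_neg]
  have hcomm : ∀ t : ℝ, exp (t • C) * Y = Y * exp (t • C) := by
    intro t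
    have hmem : exp (t • C) ∈ A := by
      refine exp_mem_of_mem A ?_
      rw [real_smul_mat]
      exact A.toSubalgebra.smul_mem hCA _
    have hstar : star (exp (t • C)) = exp (-(t • C)) := by
      have hst : star (exp (t • C)) = (exp (t • C))ᴴ := rfl
      rw [hst, ← Matrix.exp_conjTranspose, hskew]
    have hmul1 : star (exp (t • C)) * exp (t • C) = 1 := by
      rw [hstar, ← Matrix.exp_add_of_commute (-(t • C)) (t • C)
        ((Commute.refl (t • C)).neg_left), neg_add_cancel, exp_zero]
    have hmul2 : exp (t • C) * star (exp (t • C)) = 1 := by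
      rw [hstar, ← Matrix.exp_add_of_commute (t • C) (-(t • C))
        ((Commute.refl (t • C)).neg_right), add_neg_cancel, exp_zero]
    exact hY _ hmem hmul1 hmul2
  have hcy : C * Y = Y * C := comm_exp_smul hcomm
  rw [hCdef, Matrix.smul_mul, Matrix.mul_smul] at hcy
  exact smul_right_injective (Mat n) Complex.I_ne_zero hcy

lemma comm_of_comm_unitaries (A : StarSubalgebra ℂ (Mat n)) (Y : Mat n)
    (hY : ∀ u, u ∈ A → star u * u = 1 → u * star u = 1 → u * Y = Y * u)
    {a : Mat n} (ha : a ∈ A) : a * Y = Y * a := by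
  have haH : aᴴ ∈ A := by
    rw [← Matrix.star_eq_conjTranspose]
    exact star_mem ha
  set h₁ : Mat n := a + aᴴ with h1def
  set h₂ : Mat n := Complex.I • (a - aᴴ) with h2def
  have hc1 : h₁ * Y = Y * h₁ := by
    refine comm_of_comm_unitaries_sa A Y hY (A.add_mem ha haH) ?_
    rw [h1def, Matrix.conjTranspose_add, Matrix.conjTranspose_conjTranspose, add_comm]
  have hc2 : h₂ * Y = Y * h₂ := by
    refine comm_of_comm_unitaries_sa A Y hY
      (A.toSubalgebra.smul_mem (A.sub_mem ha haH) _) ?_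
    rw [h2def, Matrix.conjTranspose_smul, Matrix.conjTranspose_sub,
      Matrix.conjTranspose_conjTranspose, Complex.star_def, Complex.conj_I]
    rw [neg_smul, ← smul_neg, neg_sub]
  have hrep : a = ((1 : ℂ) / 2) • h₁ + (-(Complex.I / 2)) • h₂ := by
    rw [h1def, h2def]
    have hI : -(Complex.I / 2) * Complex.I = 1 / 2 := by
      rw [neg_mul, div_mul_eq_mul_div, Complex.I_mul_I]
      norm_num
    match_scalars <;> simp [hI] <;> ring
  calc a * Y = (((1 : ℂ) / 2) • h₁ + (-(Complex.I / 2)) • h₂) * Y := by rw [← hrep]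
  _ = ((1 : ℂ) / 2) • (h₁ * Y) + (-(Complex.I / 2)) • (h₂ * Y) := by
      rw [Matrix.add_mul, Matrix.smul_mul, Matrix.smul_mul]
  _ = ((1 : ℂ) / 2) • (Y * h₁) + (-(Complex.I / 2)) • (Y * h₂) := by rw [hc1, hc2]
  _ = Y * (((1 : ℂ) / 2) • h₁ + (-(Complex.I / 2)) • h₂) := by
      rw [h1def, h2def]
      simp only [Matrix.mul_add, Matrix.mul_sub, Matrix.mul_smul, smul_add, smul_sub]
  _ = Y * a := by rw [← hrep]

end Exp

lemma commutant_sub {S : Set (Mat n)} {X Y : Mat n}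
    (hX : X ∈ commutant S) (hY : Y ∈ commutant S) : X - Y ∈ commutant S := by
  intro a ha
  rw [Matrix.mul_sub, Matrix.sub_mul, hX a ha, hY a ha]

end CP

/-- commutator-projection lemma, lower bound. -/
theorem stmt_0 {n : ℕ} (A : StarSubalgebra ℂ (Mat n)) (B : Mat n)
    (hB : opNorm B ≤ 1) (P : Mat n → Mat n)
    (hP : IsHSProjectionOnto P (commutant (A : Set (Mat n)))) :
    opNorm (B - P B) ≤
      sSup {x : ℝ | ∃ a ∈ A, opNorm a ≤ 1 ∧ x = opNorm (a * B - B * a)} := by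
  classical
  set S : Set ℝ := {x : ℝ | ∃ a ∈ A, opNorm a ≤ 1 ∧ x = opNorm (a * B - B * a)} with hSdef
  have hbdd : BddAbove S := by
    refine ⟨2, ?_⟩
    rintro x ⟨a, ha, h1, rfl⟩
    have h2 := CP.opNorm_mul_le a B
    have h3 := CP.opNorm_mul_le B a
    have h4 := CP.opNorm_sub_le (a * B) (B * a)
    have h5 := CP.opNorm_nonneg a
    have h6 := CP.opNorm_nonneg B
    nlinarith
  set c : ℝ := sSup S with hc
  -- step 1 : commutator bound for unitaries in A
  have key : ∀ u, u ∈ A → star u * u = 1 → u * star u = 1 →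
      opNorm (B - u * B * uᴴ) ≤ c := by
    intro u hu h1 h2
    have h2' : u * uᴴ = 1 := h2
    have h1' : uᴴ * u = 1 := h1
    have hrw : B - u * B * uᴴ = (B * u - u * B) * uᴴ := by
      rw [Matrix.sub_mul]
      rw [Matrix.mul_assoc B u uᴴ, h2', Matrix.mul_one]
    have hu1 : star uᴴ * uᴴ = 1 := by
      rw [Matrix.star_eq_conjTranspose, Matrix.conjTranspose_conjTranspose]
      exact h2'
    have hu2 : uᴴ * star uᴴ = 1 := by
      rw [Matrix.star_eq_conjTranspose, Matrix.conjTranspose_conjTranspose]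
      exact h1'
    rw [hrw, CP.opNorm_mul_unitary _ hu1 hu2, CP.opNorm_sub_comm]
    exact le_csSup hbdd ⟨u, hu, CP.opNorm_le_one_of_unitary h1, rfl⟩
  -- step 2 : the unitary orbit of B and its closed convex hull
  set U : Set (Mat n) := {u : Mat n | u ∈ A ∧ star u * u = 1 ∧ u * star u = 1} with hU
  set S₀ : Set (Mat n) := (fun u : Mat n => u * B * uᴴ) '' U with hS₀
  have hBS₀ : B ∈ S₀ := by
    refine ⟨1, ⟨one_mem A, by simp, by simp⟩, by simp⟩
  set S₀' : Set (EuclideanSpace ℂ (Fin n × Fin n)) := CP.eM n '' S₀ with hS₀'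
  set K := closure (convexHull ℝ S₀') with hK
  have hKconv : Convex ℝ K := (convex_convexHull ℝ S₀').closure
  have hnorm₀ : ∀ z ∈ S₀', ‖z‖ = ‖CP.eM n B‖ := by
    rintro z ⟨X, ⟨u, hu, rfl⟩, rfl⟩
    exact CP.norm_eM_eq (CP.trace_conj_unitary _ hu.2.1)
  have hKball : K ⊆ Metric.closedBall 0 ‖CP.eM n B‖ := by
    refine closure_minimal (convexHull_min ?_ (convex_closedBall _ _)) Metric.isClosed_closedBall
    intro z hz
    rw [Metric.mem_closedBall, dist_zero_right]
    exact le_of_eq (hnorm₀ z hz)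
  have hKcomp : IsCompact K :=
    (isCompact_closedBall _ _).of_isClosed_subset isClosed_closure hKball
  have hKne : K.Nonempty :=
    ⟨CP.eM n B, subset_closure (subset_convexHull ℝ _ ⟨B, hBS₀, rfl⟩)⟩
  obtain ⟨Y', hY'K, hminOn⟩ := hKcomp.exists_isMinOn hKne continuous_norm.continuousOn
  set Y : Mat n := (CP.eM n).symm Y' with hYdef
  have hYY' : CP.eM n Y = Y' := (CP.eM n).apply_symm_apply Y'
  -- step 3 : the minimal point is fixed by all unitary conjugations
  have hfix : ∀ u, u ∈ U → u * Y * uᴴ = Y := by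
    intro u hu
    set T : EuclideanSpace ℂ (Fin n × Fin n) →ₗ[ℂ] EuclideanSpace ℂ (Fin n × Fin n) :=
      { toFun := fun z => CP.eM n (u * ((CP.eM n).symm z) * uᴴ)
        map_add' := by
          intro z w
          show CP.eM n (u * ((CP.eM n).symm (z + w)) * uᴴ) =
            CP.eM n (u * ((CP.eM n).symm z) * uᴴ) + CP.eM n (u * ((CP.eM n).symm w) * uᴴ)
          rw [map_add, Matrix.mul_add, Matrix.add_mul, map_add]
        map_smul' := by
          intro r z
          show CP.eM n (u * ((CP.eM n).symm (r • z)) * uᴴ) =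
            r • CP.eM n (u * ((CP.eM n).symm z) * uᴴ)
          rw [_root_.map_smul, Matrix.mul_smul, Matrix.smul_mul, _root_.map_smul] } with hT
    have hTapp : ∀ X : Mat n, T (CP.eM n X) = CP.eM n (u * X * uᴴ) := by
      intro X
      show CP.eM n (u * ((CP.eM n).symm (CP.eM n X)) * uᴴ) = _
      rw [(CP.eM n).symm_apply_apply]
    have hTnorm : ∀ z, ‖T z‖ = ‖z‖ := by
      intro z
      conv_rhs => rw [← (CP.eM n).apply_symm_apply z]
      rw [show T z = CP.eM n (u * ((CP.eM n).symm z) * uᴴ) from rfl]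
      exact CP.norm_eM_eq (CP.trace_conj_unitary _ hu.2.1)
    have hTS₀ : T '' S₀' ⊆ S₀' := by
      rintro _ ⟨_, ⟨X, ⟨v, hv, rfl⟩, rfl⟩, rfl⟩
      rw [hTapp]
      refine ⟨(u * v) * B * (u * v)ᴴ, ⟨u * v, ⟨mul_mem hu.1 hv.1, ?_, ?_⟩, rfl⟩, ?_⟩
      · rw [StarMul.star_mul]
        calc star v * star u * (u * v) = star v * (star u * u) * v := by noncomm_ring
        _ = 1 := by rw [hu.2.1, mul_one, hv.2.1]
      · rw [StarMul.star_mul]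
        calc u * v * (star v * star u) = u * (v * star v) * star u := by noncomm_ring
        _ = 1 := by rw [hv.2.2, mul_one, hu.2.2]
      · congr 1
        rw [Matrix.conjTranspose_mul]
        noncomm_ring
    have hTcont : Continuous T := T.continuous_of_finiteDimensional
    have hTK : T Y' ∈ K := by
      have h1 : T '' convexHull ℝ S₀' ⊆ convexHull ℝ S₀' := by
        have him : T '' convexHull ℝ S₀' = convexHull ℝ (T '' S₀') := by
          have := (T.restrictScalars ℝ).image_convexHull S₀'
          simpa using this
        rw [him]
        exact convexHull_mono hTS₀
      have h2 : T '' K ⊆ K := by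
        rw [hK]
        calc T '' closure (convexHull ℝ S₀')
            ⊆ closure (T '' convexHull ℝ S₀') := image_closure_subset_closure_image hTcont
        _ ⊆ closure (convexHull ℝ S₀') := closure_mono h1
      exact h2 (Set.mem_image_of_mem _ hY'K)
    have heq : T Y' = Y' := by
      by_contra hne
      have hmid : ((1 : ℝ)/2) • Y' + ((1 : ℝ)/2) • (T Y') ∈ K :=
        hKconv hY'K hTK (by norm_num) (by norm_num) (by norm_num)
      have hminmid : ‖Y'‖ ≤ ‖((1 : ℝ)/2) • Y' + ((1 : ℝ)/2) • (T Y')‖ := hminOn hmid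
      have hmineq : ‖Y'‖ ≤ ‖T Y'‖ := hminOn hTK
      have hTn : ‖T Y'‖ = ‖Y'‖ := hTnorm Y'
      have hpar := parallelogram_law_with_norm ℂ Y' (T Y')
      have hsum : ((1 : ℝ)/2) • Y' + ((1 : ℝ)/2) • (T Y') = ((1 : ℝ)/2) • (Y' + T Y') := by
        rw [smul_add]
      have hnorm_mid : ‖((1 : ℝ)/2) • Y' + ((1 : ℝ)/2) • (T Y')‖ = (1/2) * ‖Y' + T Y'‖ := by
        rw [hsum, norm_smul]
        norm_num
      have hd : Y' - T Y' ≠ 0 := sub_ne_zero.mpr (fun h => hne h.symm)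
      have hdpos : 0 < ‖Y' - T Y'‖ := norm_pos_iff.mpr hd
      nlinarith [norm_nonneg Y', norm_nonneg (Y' + T Y')]
    have := hTapp Y
    rw [hYY', heq, ← hYY'] at this
    exact ((CP.eM n).injective this).symm
  -- step 4 : Y lies in the commutant
  have hYcomm : Y ∈ commutant (A : Set (Mat n)) := by
    intro a ha
    refine CP.comm_of_comm_unitaries A Y ?_ ha
    intro u hu h1 h2
    have h := hfix u ⟨hu, h1, h2⟩
    have h1' : uᴴ * u = 1 := h1
    calc u * Y = u * Y * 1 := by rw [Matrix.mul_one]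
    _ = u * Y * (uᴴ * u) := by rw [h1']
    _ = (u * Y * uᴴ) * u := by noncomm_ring
    _ = Y * u := by rw [h]
  -- step 5 : Y belongs to every closed convex set containing the unitary orbit
  have heMcont : Continuous (CP.eM n) := (CP.eM n).toLinearMap.continuous_of_finiteDimensional
  have heMsymmcont : Continuous (CP.eM n).symm :=
    (CP.eM n).symm.toLinearMap.continuous_of_finiteDimensional
  have hcontain : ∀ Cs : Set (Mat n), Convex ℝ Cs → IsClosed Cs → S₀ ⊆ Cs → Y ∈ Cs := by
    intro Cs hconv hcl hsub
    have hconv' : Convex ℝ (CP.eM n '' Cs) :=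
      hconv.linear_image ((CP.eM n).toLinearMap.restrictScalars ℝ)
    have hcl' : IsClosed (CP.eM n '' Cs) := by
      have hhomeo : IsClosedMap (CP.eM n) :=
        (Homeomorph.mk (CP.eM n).toEquiv heMcont heMsymmcont).isClosedMap
      exact hhomeo _ hcl
    have hK' : K ⊆ CP.eM n '' Cs :=
      closure_minimal (convexHull_min (Set.image_mono hsub) hconv') hcl'
    obtain ⟨X, hX, hXY⟩ := hK' hY'K
    have hXeq : X = Y := by
      rw [hYdef, ← hXY, (CP.eM n).symm_apply_apply]
    rwa [← hXeq]
  -- step 6 : trace identity against the commutant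
  haveI : FiniteDimensional ℝ (Mat n) := Module.Finite.trans ℂ (Mat n)
  have htr : ∀ Z, Z ∈ commutant (A : Set (Mat n)) →
      (Yᴴ * Z).trace = (Bᴴ * Z).trace := by
    intro Z hZ
    have hconv : Convex ℝ {X : Mat n | (Xᴴ * Z).trace = (Bᴴ * Z).trace} := by
      intro X1 h1 X2 h2 a b ha hb hab
      simp only [Set.mem_setOf_eq] at h1 h2 ⊢
      rw [CP.real_smul_mat, CP.real_smul_mat, Matrix.conjTranspose_add,
        Matrix.conjTranspose_smul, Matrix.conjTranspose_smul,
        Complex.star_def, Complex.conj_ofReal, Complex.conj_ofReal,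
        Matrix.add_mul, Matrix.smul_mul, Matrix.smul_mul, Matrix.trace_add,
        Matrix.trace_smul, Matrix.trace_smul, h1, h2, smul_eq_mul, smul_eq_mul,
        ← add_mul]
      have hab2 : ((a : ℂ) + (b : ℂ)) = 1 := by
        have h := congrArg (fun t : ℝ => (t : ℂ)) hab
        push_cast at h
        exact h
      rw [hab2, one_mul]
    have hcl : IsClosed {X : Mat n | (Xᴴ * Z).trace = (Bᴴ * Z).trace} := by
      have hLcont : Continuous fun X : Mat n => (Xᴴ * Z).trace := by
        let L : Mat n →ₗ[ℝ] ℂ :=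
          { toFun := fun X => (Xᴴ * Z).trace
            map_add' := by
              intro X1 X2
              show (((X1 + X2))ᴴ * Z).trace = ((X1ᴴ * Z).trace) + ((X2ᴴ * Z).trace)
              rw [Matrix.conjTranspose_add, Matrix.add_mul, Matrix.trace_add]
            map_smul' := by
              intro r X
              show (((r • X))ᴴ * Z).trace = r • ((Xᴴ * Z).trace)
              rw [CP.real_smul_mat, Matrix.conjTranspose_smul, Complex.star_def,
                Complex.conj_ofReal, Matrix.smul_mul, Matrix.trace_smul]
              simp [Complex.real_smul] }
        exact L.continuous_of_finiteDimensional
      exact isClosed_eq hLcont continuous_const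
    have hsub : S₀ ⊆ {X : Mat n | (Xᴴ * Z).trace = (Bᴴ * Z).trace} := by
      rintro _ ⟨u, hu, rfl⟩
      simp only [Set.mem_setOf_eq]
      have h1 : uᴴ * u = 1 := hu.2.1
      have h2 : u * uᴴ = 1 := hu.2.2
      have hZu : u * Z = Z * u := hZ u hu.1
      have hZuH : uᴴ * Z = Z * uᴴ := by
        calc uᴴ * Z = uᴴ * Z * (u * uᴴ) := by rw [h2, Matrix.mul_one]
        _ = uᴴ * (Z * u) * uᴴ := by noncomm_ring
        _ = uᴴ * (u * Z) * uᴴ := by rw [← hZu]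
        _ = (uᴴ * u) * Z * uᴴ := by noncomm_ring
        _ = Z * uᴴ := by rw [h1, Matrix.one_mul]
      have hct : (u * B * uᴴ)ᴴ = u * Bᴴ * uᴴ := by
        simp [Matrix.conjTranspose_mul, Matrix.mul_assoc]
      calc ((u * B * uᴴ)ᴴ * Z).trace = (u * Bᴴ * (uᴴ * Z)).trace := by
            rw [hct, Matrix.mul_assoc]
      _ = (u * Bᴴ * (Z * uᴴ)).trace := by rw [hZuH]
      _ = ((u * (Bᴴ * Z)) * uᴴ).trace := by congr 1; noncomm_ring
      _ = ((uᴴ * u) * (Bᴴ * Z)).trace := by rw [Matrix.trace_mul_cycle, Matrix.mul_assoc]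
      _ = (Bᴴ * Z).trace := by rw [h1, Matrix.one_mul]
    exact hcontain _ hconv hcl hsub
  -- step 7 : P B = Y
  have hPB : P B = Y := by
    have hW : P B - Y ∈ commutant (A : Set (Mat n)) :=
      CP.commutant_sub (hP.1 B) hYcomm
    have h1 : ((P B)ᴴ * (P B - Y)).trace = (Bᴴ * (P B - Y)).trace := by
      rw [hP.2.2 B (P B - Y), hP.2.1 (P B - Y) hW]
    have h2 : (Yᴴ * (P B - Y)).trace = (Bᴴ * (P B - Y)).trace := htr _ hW
    have h3 : (((P B - Y))ᴴ * (P B - Y)).trace = 0 := by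
      rw [Matrix.conjTranspose_sub, Matrix.sub_mul, Matrix.trace_sub, h1, h2, sub_self]
    have h4 : (inner ℂ (CP.eM n (P B - Y)) (CP.eM n (P B - Y)) : ℂ) = 0 := by
      rw [CP.inner_eM, h3]
    have h5 : CP.eM n (P B - Y) = 0 := inner_self_eq_zero.mp h4
    have h6 : P B - Y = 0 := CP.eM_inj h5
    exact sub_eq_zero.mp h6
  -- step 8 : conclusion
  have hfin : Y ∈ {X : Mat n | opNorm (B - X) ≤ c} := by
    refine hcontain _ ?_ ?_ ?_
    · -- convexity of the opNorm ball around B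
      intro X1 h1 X2 h2 a b ha hb hab
      simp only [Set.mem_setOf_eq] at h1 h2 ⊢
      have hsplit : B - (a • X1 + b • X2) = a • (B - X1) + b • (B - X2) := by
        rw [CP.real_smul_mat, CP.real_smul_mat, CP.real_smul_mat, CP.real_smul_mat]
        have hab' : ((a : ℂ) + (b : ℂ)) = 1 := by
          have h := congrArg (fun t : ℝ => (t : ℂ)) hab
          push_cast at h
          exact h
        match_scalars <;> simp <;> linear_combination hab'.symm
      rw [hsplit]
      have e1 : opNorm (a • (B - X1)) = a * opNorm (B - X1) := by
        rw [CP.real_smul_mat, CP.opNorm_smul, Complex.norm_real, Real.norm_eq_abs,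
          abs_of_nonneg ha]
      have e2 : opNorm (b • (B - X2)) = b * opNorm (B - X2) := by
        rw [CP.real_smul_mat, CP.opNorm_smul, Complex.norm_real, Real.norm_eq_abs,
          abs_of_nonneg hb]
      have e3 := CP.opNorm_add_le (a • (B - X1)) (b • (B - X2))
      nlinarith [CP.opNorm_nonneg (B - X1), CP.opNorm_nonneg (B - X2)]
    · have hcontB : Continuous fun X : Mat n => opNorm (B - X) :=
        CP.continuous_opNorm.comp (continuous_const.sub continuous_id)
      exact isClosed_le hcontB continuous_const
    · rintro _ ⟨u, hu, rfl⟩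
      exact key u hu.1 hu.2.1 hu.2.2
  rw [hPB]
  exact hfin
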